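/- Robert's theorem: if F = Σ_{i=0}^m C(m,i) f_i Y_1^{m−i} Y_2^i is a covariant of order m with leading coefficient f_0, then f_i = D_2^i(f_0)/i! for all 0 ≤ i ≤ m; i.e. F = Σ_{i=0}^{m} (D_2^i(f_0)/i!) Y_1^{m−i} Y_2^i. -/

import Mathlib

open MvPolynomial

/-- Coefficient ring `ℂ[t, x_1, …, x_d]` (variable `0` is `t`). -/
abbrev R (d : ℕ) := MvPolynomial (Fin (d+1)) ℂ

/-- `ℂ[t, x_1, …, x_d][Y₁, Y₂]`, with `Y₁ = X 0`, `Y₂ = X 1` the outer variables. -/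
abbrev S (d : ℕ) := MvPolynomial (Fin 2) (R d)

open Fin.NatCast in
/-- `D₁ = Σ_{j=1}^{d} j·x_{j-1}·∂/∂x_j` (with `x_0 := t`). -/
noncomputable def D1 (d : ℕ) (f : R d) : R d :=
  ∑ j ∈ Finset.range d, (((j+1 : ℕ)) : ℂ) •
    (X ((j : ℕ) : Fin (d+1)) * pderiv (((j+1 : ℕ)) : Fin (d+1)) f)

open Fin.NatCast in
/-- `D₂ = d·x₁·∂/∂t + Σ_{j=1}^{d-1} (d-j)·x_{j+1}·∂/∂x_j`. -/
noncomputable def D2 (d : ℕ) (f : R d) : R d :=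
  (d : ℂ) • (X 1 * pderiv 0 f) +
  ∑ j ∈ Finset.range (d-1), (((d - (j+1) : ℕ)) : ℂ) •
    (X (((j+2 : ℕ)) : Fin (d+1)) * pderiv (((j+1 : ℕ)) : Fin (d+1)) f)

/-- Coefficientwise application of an operator on `R d` to an element of `S d`. -/
noncomputable def liftC (d : ℕ) (D : R d → R d) (f : S d) : S d :=
  ∑ m ∈ f.support, MvPolynomial.monomial m (D (MvPolynomial.coeff m f))

/-- The covariance operator `D₁ - Y₂ ∂/∂Y₁`. -/
noncomputable def V1 (d : ℕ) (f : S d) : S d :=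
  liftC d (D1 d) f - X 1 * pderiv (0 : Fin 2) f

/-- The covariance operator `D₂ - Y₁ ∂/∂Y₂`. -/
noncomputable def V2 (d : ℕ) (f : S d) : S d :=
  liftC d (D2 d) f - X 0 * pderiv (1 : Fin 2) f

lemma D2_zero (d : ℕ) : D2 d 0 = 0 := by simp [D2]

lemma D2_smul (d : ℕ) (c : ℂ) (x : R d) : D2 d (c • x) = c • D2 d x := by
  simp [D2, map_smul, mul_smul_comm, smul_comm c, Finset.smul_sum, smul_add]

lemma coeff_liftC (d : ℕ) (D : R d → R d) (hD : D 0 = 0) (f : S d) (n : Fin 2 →₀ ℕ) :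
    MvPolynomial.coeff n (liftC d D f) = D (MvPolynomial.coeff n f) := by
  unfold liftC
  rw [MvPolynomial.coeff_sum]
  simp only [MvPolynomial.coeff_monomial]
  rw [Finset.sum_ite_eq' f.support n (fun m => D (MvPolynomial.coeff m f))]
  by_cases h : n ∈ f.support
  · simp [h]
  · simp [h, MvPolynomial.notMem_support_iff.mp h, hD]

noncomputable def mu (a b : ℕ) : Fin 2 →₀ ℕ := Finsupp.single 0 a + Finsupp.single 1 b

lemma mu_inj {a b c e : ℕ} : mu a b = mu c e ↔ a = c ∧ b = e := by
  constructor
  · intro h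
    have h0 := DFunLike.congr_fun h 0
    have h1 := DFunLike.congr_fun h 1
    simp [mu, Finsupp.single_apply] at h0 h1
    exact ⟨h0, h1⟩
  · rintro ⟨rfl, rfl⟩; rfl

lemma mono_eq (d : ℕ) (a : R d) (p q : ℕ) :
    (MvPolynomial.C a * X 0 ^ p * X 1 ^ q : S d) = MvPolynomial.monomial (mu p q) a := by
  rw [MvPolynomial.X_pow_eq_monomial, MvPolynomial.X_pow_eq_monomial,
    MvPolynomial.C_apply, MvPolynomial.monomial_mul, MvPolynomial.monomial_mul]
  simp [mu]


lemma Xpd (d : ℕ) (a b : ℕ) (r : R d) :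
    (X 0 * pderiv (1 : Fin 2) (MvPolynomial.monomial (mu a b) r) : S d)
      = MvPolynomial.monomial (mu (a+1) (b-1)) (r * b) := by
  have h2 : (mu a b) 1 = b := by simp [mu, Finsupp.single_apply]
  have h3 : (Finsupp.single (0 : Fin 2) 1) + (mu a b - Finsupp.single 1 1) = mu (a+1) (b-1) := by
    ext x
    fin_cases x <;> simp [mu, Finsupp.single_apply] <;> omega
  rw [MvPolynomial.pderiv_monomial, h2, MvPolynomial.X, MvPolynomial.monomial_mul, one_mul, h3]

/-- Robert's theorem: a covariant `F = Σ C(m,i) fᵢ Y₁^{m-i} Y₂^i` of order `m` is determined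
by its leading coefficient `f₀`, namely `F = Σ (D₂^i(f₀)/i!) Y₁^{m-i} Y₂^i`. -/
theorem stmt13 (d : ℕ) (hd : 1 ≤ d) (m : ℕ) (f : ℕ → R d)
    (F : S d)
    (hF : F = ∑ i ∈ Finset.range (m+1), ((m.choose i : ℂ)) •
        (MvPolynomial.C (f i) * X 0 ^ (m-i) * X 1 ^ i))
    (h1 : V1 d F = 0) (h2 : V2 d F = 0) :
    F = ∑ i ∈ Finset.range (m+1), ((Nat.factorial i : ℂ))⁻¹ •
        (MvPolynomial.C ((D2 d)^[i] (f 0)) * X 0 ^ (m-i) * X 1 ^ i) := by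
  replace h2 : liftC d (D2 d) F - X 0 * pderiv (1 : Fin 2) F = 0 := h2
  set g : ℕ → R d := fun i => (m.choose i : ℂ) • f i with hg
  have hFg : F = ∑ i ∈ Finset.range (m+1), MvPolynomial.monomial (mu (m-i) i) (g i) := by
    rw [hF]
    refine Finset.sum_congr rfl fun i _ => ?_
    rw [mono_eq, MvPolynomial.smul_monomial]
  have coeffF : ∀ j, j ≤ m → MvPolynomial.coeff (mu (m-j) j) F = g j := by
    intro j hj
    rw [hFg, MvPolynomial.coeff_sum]
    simp only [MvPolynomial.coeff_monomial]
    rw [Finset.sum_eq_single j]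
    · simp
    · intro i hi hne
      rw [if_neg]
      intro h
      exact hne (mu_inj.mp h).2
    · intro h; simp at h; omega
  have heq : liftC d (D2 d) F = X 0 * pderiv (1 : Fin 2) F := by
    have := sub_eq_zero.mp h2; exact this
  have hRHS : (X 0 * pderiv (1 : Fin 2) F : S d)
      = ∑ i ∈ Finset.range (m+1), MvPolynomial.monomial (mu (m-i+1) (i-1)) (g i * i) := by
    rw [hFg, map_sum, Finset.mul_sum]
    refine Finset.sum_congr rfl fun i _ => Xpd d (m-i) i (g i)
  have key : ∀ j, j + 1 ≤ m → D2 d (g j) = ((j+1 : ℕ) : ℂ) • g (j+1) := by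
    intro j hj
    have h3 := congrArg (MvPolynomial.coeff (mu (m-j) j)) heq
    rw [coeff_liftC d _ (D2_zero d) F, coeffF j (by omega), hRHS, MvPolynomial.coeff_sum] at h3
    simp only [MvPolynomial.coeff_monomial] at h3
    rw [Finset.sum_eq_single (j+1)] at h3
    · rw [if_pos (mu_inj.mpr ⟨by omega, by omega⟩)] at h3
      rw [h3]
      simp [MvPolynomial.smul_eq_C_mul, mul_comm]
    · intro i hi hne
      rw [if_neg]
      intro h
      obtain ⟨ha, hb⟩ := mu_inj.mp h
      simp at hi
      omega
    · intro h; simp at h; omega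
  have claim : ∀ j, j ≤ m → g j = (j.factorial : ℂ)⁻¹ • (D2 d)^[j] (f 0) := by
    intro j
    induction j with
    | zero => intro _; simp [hg]
    | succ j ih =>
      intro hj
      have hgj := ih (by omega)
      have hk := key j hj
      have hne : ((j+1 : ℕ) : ℂ) ≠ 0 := Nat.cast_ne_zero.mpr (by omega)
      have : g (j+1) = ((j+1 : ℕ) : ℂ)⁻¹ • D2 d (g j) := by
        rw [hk, smul_smul, inv_mul_cancel₀ hne, one_smul]
      rw [this, hgj, D2_smul, smul_smul, Function.iterate_succ_apply']
      congr 1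
      rw [Nat.factorial_succ]
      push_cast
      rw [mul_inv]
  rw [hFg]
  refine Finset.sum_congr rfl fun i hi => ?_
  rw [mono_eq, MvPolynomial.smul_monomial, claim i (by simp at hi; omega)]
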